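/- Let T' = #·T·$ with sentinels #, $ ∉ Σ. If W is a nonempty string over Σ that is right-maximal in T', then there exists a (possibly empty) string V such that VW is left-maximal in T', the number of occurrences of VW in T' equals the number of occurrences of W in T', and Σ^r_{T'}(VW) = Σ^r_{T'}(W). Consequently VW is a maximal repeat of T'. -/

import Mathlib

set_option linter.unusedVariables false
set_option linter.unusedSectionVars false

/-- Number of (factor) occurrences of `W` in `T`: the number of starting
positions `i` such that `W` is a prefix of `T.drop i`. -/
def occ {α : Type*} [DecidableEq α] (T W : List α) : ℕ :=
  (List.range (T.length + 1)).countP fun i => decide (W <+: T.drop i)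

/-- `W` is right-maximal in `T`: at least two distinct right extensions occur. -/
def rightMax {α : Type*} (T W : List α) : Prop :=
  ∃ b c, b ≠ c ∧ (W ++ [b]) <:+: T ∧ (W ++ [c]) <:+: T

/-- `W` is left-maximal in `T`: at least two distinct left extensions occur. -/
def leftMax {α : Type*} (T W : List α) : Prop :=
  ∃ a c, a ≠ c ∧ (a :: W) <:+: T ∧ (c :: W) <:+: T

namespace LeftSat

variable {α : Type*} [DecidableEq α]

lemma infix_iff_exists_drop (X T : List α) :
    X <:+: T ↔ ∃ i ≤ T.length, X <+: T.drop i := by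
  constructor
  · rintro ⟨s, t, rfl⟩
    refine ⟨s.length, by simp, ?_⟩
    rw [List.append_assoc, List.drop_left]
    exact ⟨t, rfl⟩
  · rintro ⟨i, _, h⟩
    exact h.isInfix.trans (List.drop_suffix i T).isInfix

lemma two_le_countP (n : ℕ) (p : ℕ → Bool) (i j : ℕ) (hi : i < n) (hj : j < n)
    (hij : i ≠ j) (hpi : p i) (hpj : p j) : 2 ≤ (List.range n).countP p := by
  have h1 : i ∈ (List.range n).filter p := by
    simp [List.mem_filter, List.mem_range, hi, hpi]
  have h2 : j ∈ (List.range n).filter p := by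
    simp [List.mem_filter, List.mem_range, hj, hpj]
  rw [List.countP_eq_length_filter]
  rcases h : (List.range n).filter p with _ | ⟨x, _ | ⟨y, t⟩⟩
  · rw [h] at h1; simp at h1
  · rw [h] at h1 h2; simp at h1 h2; omega
  · simp

lemma countP_le_one (n : ℕ) (p : ℕ → Bool) (h : ∀ i < n, p i → i = 0) :
    (List.range n).countP p ≤ 1 := by
  rw [List.countP_eq_length_filter]
  rcases hf : (List.range n).filter p with _ | ⟨x, _ | ⟨y, t⟩⟩
  · simp
  · simp
  · exfalso
    have hnd : ((List.range n).filter p).Nodup := (List.nodup_range (n := n)).filter _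
    have hx : x ∈ (List.range n).filter p := by rw [hf]; simp
    have hy : y ∈ (List.range n).filter p := by rw [hf]; simp
    rw [List.mem_filter, List.mem_range] at hx hy
    have hx0 := h x hx.1 hx.2
    have hy0 := h y hy.1 hy.2
    rw [hf] at hnd
    simp [List.nodup_cons] at hnd
    omega

section core
variable (T : List α) (hash dol : α)

/-- A nonempty string occurring at least twice in `#T$` is not a prefix of it. -/
lemma not_prefix_of_two (hh : hash ∉ T) (hhd : hash ≠ dol)
    (X : List α) (hX : X ≠ []) (hocc : 2 ≤ occ (hash :: T ++ [dol]) X) :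
    ¬ X <+: (hash :: T ++ [dol]) := by
  intro hpre
  set T' : List α := hash :: T ++ [dol] with hT'
  rcases X with _ | ⟨x, X'⟩
  · exact hX rfl
  have hx : x = hash := by
    rcases hpre with ⟨t, ht⟩
    have h := congrArg List.head? ht
    rw [hT'] at h
    simpa using h
  have hkey : ∀ i < T'.length + 1,
      (decide ((x :: X') <+: T'.drop i) : Bool) → i = 0 := by
    intro i hi hp
    by_contra h0
    have h1 : 1 ≤ i := Nat.one_le_iff_ne_zero.mpr h0
    have hmem : x ∈ T'.drop i := by
      have := of_decide_eq_true hp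
      exact this.subset (by simp)
    have hdr : T'.drop i = (T ++ [dol]).drop (i - 1) := by
      rw [hT']
      rcases Nat.exists_eq_add_of_le h1 with ⟨k, rfl⟩
      rw [Nat.add_comm 1 k]
      simp [List.cons_append, List.drop_succ_cons]
    rw [hdr, hx] at hmem
    have hmem2 : hash ∈ T ++ [dol] := (List.drop_subset _ _) hmem
    simp [hh, hhd] at hmem2
  have := countP_le_one (T'.length + 1) _ hkey
  unfold occ at hocc
  omega

lemma exists_occ_of_pos (X : List α) (h : 0 < occ (hash :: T ++ [dol]) X) :
    ∃ j ≤ (hash :: T ++ [dol]).length, X <+: (hash :: T ++ [dol]).drop j := by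
  unfold occ at h
  rw [List.countP_pos_iff] at h
  obtain ⟨j, hj, hp⟩ := h
  rw [List.mem_range] at hj
  exact ⟨j, by omega, of_decide_eq_true hp⟩

lemma step (hh : hash ∉ T) (hhd : hash ≠ dol) (X : List α) (hX : X ≠ [])
    (hocc : 2 ≤ occ (hash :: T ++ [dol]) X)
    (hnl : ¬ leftMax (hash :: T ++ [dol]) X) :
    ∃ a, occ (hash :: T ++ [dol]) (a :: X) = occ (hash :: T ++ [dol]) X ∧
      ∀ b, ((a :: X) ++ [b]) <:+: (hash :: T ++ [dol]) ↔
        (X ++ [b]) <:+: (hash :: T ++ [dol]) := by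
  set T' : List α := hash :: T ++ [dol] with hT'
  have hnp := not_prefix_of_two T hash dol hh hhd X hX hocc
  have hcons : ∀ j, X <+: T'.drop j →
      1 ≤ j ∧ j < T'.length ∧ ∃ c, T'.drop (j - 1) = c :: T'.drop j := by
    intro j hj
    have hj1 : 1 ≤ j := by
      rcases Nat.eq_zero_or_pos j with rfl | h
      · exact absurd (by simpa [hT'] using hj) hnp
      · exact h
    have hjlt : j < T'.length := by
      by_contra h
      push_neg at h
      rw [List.drop_eq_nil_of_le h] at hj
      exact hX (List.prefix_nil.mp hj)
    have hlt : j - 1 < T'.length := by omega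
    refine ⟨hj1, hjlt, T'[j-1]'hlt, ?_⟩
    have := List.drop_eq_getElem_cons hlt
    rwa [show j - 1 + 1 = j by omega] at this
  obtain ⟨j₀, hj₀L, hj₀⟩ := exists_occ_of_pos T hash dol X (by rw [← hT']; omega)
  obtain ⟨hj₀1, hj₀lt, a, hc₀⟩ := hcons j₀ hj₀
  have ha : (a :: X) <+: T'.drop (j₀ - 1) := by
    rw [hc₀]
    exact List.cons_prefix_cons.mpr ⟨rfl, hj₀⟩
  have haInf : (a :: X) <:+: T' :=
    (infix_iff_exists_drop _ _).mpr ⟨j₀ - 1, by omega, ha⟩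
  have hall : ∀ j, X <+: T'.drop j →
      1 ≤ j ∧ T'.drop (j - 1) = a :: T'.drop j := by
    intro j hj
    obtain ⟨hj1, hjlt, c, hc⟩ := hcons j hj
    have hcInf : (c :: X) <:+: T' := by
      refine (infix_iff_exists_drop _ _).mpr ⟨j - 1, by omega, ?_⟩
      rw [hc]
      exact List.cons_prefix_cons.mpr ⟨rfl, hj⟩
    have hca : c = a := by
      by_contra hne
      exact hnl ⟨_, _, hne, hcInf, haInf⟩
    rw [hc, hca]
    exact ⟨hj1, rfl⟩
  have hiff : ∀ i, ((a :: X) <+: T'.drop i) ↔ (X <+: T'.drop (i + 1)) := by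
    intro i
    constructor
    · rintro ⟨t, ht⟩
      refine ⟨t, ?_⟩
      have h2 := congrArg List.tail ht
      rw [List.tail_drop] at h2
      simpa using h2
    · intro h
      obtain ⟨_, h2⟩ := hall (i + 1) h
      rw [show i + 1 - 1 = i from rfl] at h2
      rw [h2]
      exact List.cons_prefix_cons.mpr ⟨rfl, h⟩
  refine ⟨a, ?_, ?_⟩
  · unfold occ
    have e1 : (List.range (T'.length + 1)).countP
        (fun i => decide ((a :: X) <+: T'.drop i)) =
        (List.range T'.length).countP (fun i => decide ((a :: X) <+: T'.drop i)) := by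
      rw [List.range_succ, List.countP_append]
      have : decide ((a :: X) <+: T'.drop T'.length) = false := by
        rw [List.drop_length]
        simp
      simp [this]
    have e2 : (List.range (T'.length + 1)).countP
        (fun i => decide (X <+: T'.drop i)) =
        (List.range T'.length).countP (fun i => decide (X <+: T'.drop (i + 1))) := by
      rw [List.range_succ_eq_map, List.countP_cons, List.countP_map]
      have h0 : decide (X <+: T'.drop 0) = false := by
        rw [List.drop_zero, hT']
        exact decide_eq_false hnp
      rw [h0]
      simp only [Bool.false_eq_true, if_false, Nat.add_zero, cond_false]
      rfl
    rw [e1, e2]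
    exact List.countP_congr fun i _ => by
      simp only [decide_eq_true_eq]
      exact hiff i
  · intro b
    constructor
    · intro h
      have h2 : (X ++ [b]) <:+: ((a :: X) ++ [b]) := ⟨[a], [], by simp⟩
      exact h2.trans h
    · intro h
      obtain ⟨j, hjL, hj⟩ := (infix_iff_exists_drop _ _).mp h
      have hXj : X <+: T'.drop j := (List.prefix_append X [b]).trans hj
      obtain ⟨hj1, h2⟩ := hall j hXj
      refine (infix_iff_exists_drop _ _).mpr ⟨j - 1, by omega, ?_⟩
      rw [h2, show (a :: X) ++ [b] = a :: (X ++ [b]) from rfl]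
      exact List.cons_prefix_cons.mpr ⟨rfl, hj⟩

lemma occ_one_ge (hh : hash ∉ T) (hhd : hash ≠ dol) (X : List α) (hX : X ≠ [])
    (hocc : 2 ≤ occ (hash :: T ++ [dol]) X) :
    X.length < (hash :: T ++ [dol]).length := by
  obtain ⟨j, hjL, hj⟩ := exists_occ_of_pos T hash dol X (by omega)
  have hj1 : 1 ≤ j := by
    rcases Nat.eq_zero_or_pos j with rfl | h
    · exact absurd (by simpa using hj) (not_prefix_of_two T hash dol hh hhd X hX hocc)
    · exact h
  have hlb := hj.length_le
  rw [List.length_drop] at hlb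
  omega

lemma saturate (hh : hash ∉ T) (hhd : hash ≠ dol) :
    ∀ n (X : List α), X ≠ [] → (hash :: T ++ [dol]).length - X.length ≤ n →
    2 ≤ occ (hash :: T ++ [dol]) X →
    ∃ V, leftMax (hash :: T ++ [dol]) (V ++ X) ∧
      occ (hash :: T ++ [dol]) (V ++ X) = occ (hash :: T ++ [dol]) X ∧
      ∀ b, ((V ++ X) ++ [b]) <:+: (hash :: T ++ [dol]) ↔
        (X ++ [b]) <:+: (hash :: T ++ [dol]) := by
  intro n
  induction n with
  | zero =>
    intro X hX hlen hocc
    exfalso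
    have := occ_one_ge T hash dol hh hhd X hX hocc
    omega
  | succ n ih =>
    intro X hX hlen hocc
    by_cases hl : leftMax (hash :: T ++ [dol]) X
    · exact ⟨[], by simpa using hl, by simp, fun b => Iff.rfl⟩
    · obtain ⟨a, ho, he⟩ := step T hash dol hh hhd X hX hocc hl
      have hbd := occ_one_ge T hash dol hh hhd X hX hocc
      obtain ⟨V, h1, h2, h3⟩ := ih (a :: X) (by simp)
        (by simp only [List.length_cons]; omega) (by rw [ho]; exact hocc)
      refine ⟨V ++ [a], ?_, ?_, ?_⟩
      · rw [List.append_assoc, List.singleton_append]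
        exact h1
      · rw [List.append_assoc, List.singleton_append, h2, ho]
      · intro b
        have heq : ((V ++ [a]) ++ X) ++ [b] = (V ++ (a :: X)) ++ [b] := by simp
        rw [heq]
        exact (h3 b).trans (he b)

theorem left_saturate_rightMax' (W : List α)
    (hh : hash ∉ T) (hd : dol ∉ T) (hhd : hash ≠ dol)
    (hW : W ≠ []) (hWsig : ∀ x ∈ W, x ≠ hash ∧ x ≠ dol)
    (hrm : rightMax (hash :: T ++ [dol]) W) :
    ∃ V : List α,
      leftMax (hash :: T ++ [dol]) (V ++ W) ∧
      occ (hash :: T ++ [dol]) (V ++ W) = occ (hash :: T ++ [dol]) W ∧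
      (∀ b : α, ((V ++ W) ++ [b]) <:+: (hash :: T ++ [dol]) ↔
        (W ++ [b]) <:+: (hash :: T ++ [dol])) ∧
      rightMax (hash :: T ++ [dol]) (V ++ W) := by
  obtain ⟨b, c, hbc, hb, hc⟩ := hrm
  obtain ⟨i, hiL, hib⟩ := (infix_iff_exists_drop _ _).mp hb
  obtain ⟨j, hjL, hjc⟩ := (infix_iff_exists_drop _ _).mp hc
  have hWi : W <+: (hash :: T ++ [dol]).drop i := (List.prefix_append W [b]).trans hib
  have hWj : W <+: (hash :: T ++ [dol]).drop j := (List.prefix_append W [c]).trans hjc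
  have hij : i ≠ j := by
    rintro rfl
    have hlen : (W ++ [b]).length = (W ++ [c]).length := by simp
    have h1 : (W ++ [b]) <+: (W ++ [c]) :=
      List.prefix_of_prefix_length_le hib hjc (by omega)
    have := List.IsPrefix.eq_of_length h1 hlen
    simp at this
    exact hbc this
  have hocc2 : 2 ≤ occ (hash :: T ++ [dol]) W := by
    unfold occ
    exact two_le_countP _ _ i j (by omega)
      (by omega) hij (decide_eq_true hWi) (decide_eq_true hWj)
  obtain ⟨V, h1, h2, h3⟩ := saturate T hash dol hh hhd
    (hash :: T ++ [dol]).length W hW (by omega) hocc2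
  exact ⟨V, h1, h2, h3, b, c, hbc, (h3 b).mpr hb, (h3 c).mpr hc⟩

end core
end LeftSat

/-- with `T' = # · T · $`, every nonempty right-maximal `W` over
`Σ` has a left extension `VW` that is left-maximal, has the same number of
occurrences, and the same right extensions; hence `VW` is a maximal repeat. -/
theorem left_saturate_rightMax {α : Type*} [DecidableEq α]
    (T W : List α) (hash dol : α)
    (hh : hash ∉ T) (hd : dol ∉ T) (hhd : hash ≠ dol)
    (hW : W ≠ []) (hWsig : ∀ x ∈ W, x ≠ hash ∧ x ≠ dol)
    (hrm : rightMax (hash :: T ++ [dol]) W) :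
    ∃ V : List α,
      leftMax (hash :: T ++ [dol]) (V ++ W) ∧
      occ (hash :: T ++ [dol]) (V ++ W) = occ (hash :: T ++ [dol]) W ∧
      (∀ b : α, ((V ++ W) ++ [b]) <:+: (hash :: T ++ [dol]) ↔
        (W ++ [b]) <:+: (hash :: T ++ [dol])) ∧
      rightMax (hash :: T ++ [dol]) (V ++ W) :=
  LeftSat.left_saturate_rightMax' T hash dol W hh hd hhd hW hWsig hrm
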